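/- Let A be a bounded self-adjoint positive-definite operator on l²(E) (⟨f, A f⟩ > 0 for all f ≠ 0), let ξ ⊆ E and x ∈ E with x ∉ ξ. For finite F ⊆ ξ write r(F) := det A(F∪{x}, F∪{x}) / det A(F,F), where A(S,S) := (A(y,z))_{y,z∈S}. Then: (i) r is antitone, i.e. F ⊆ F' ⊆ ξ finite implies r(F') ≤ r(F); and (ii) the infimum of r(F) over all finite F ⊆ ξ equals α(x;ξ) := inf{⟨e_x − f, A(e_x − f)⟩ : f in the linear span of {e_y : y ∈ ξ}}. In particular the net (r(ξ∩Λ))_{Λ finite, Λ ↑ E} converges to α(x;ξ). -/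

import Mathlib

open Filter ComplexConjugate Matrix
open scoped ComplexOrder

/-- The standard basis vector `e_x` of `l²(E)`. -/
noncomputable def evec {E : Type*} [DecidableEq E] (x : E) : lp (fun _ : E => ℂ) 2 :=
  lp.single 2 x 1

/-- The matrix entries `A(x,y) = ⟨e_x, A e_y⟩` of a bounded operator on `l²(E)`. -/
noncomputable def matEnt {E : Type*} [DecidableEq E]
    (A : lp (fun _ : E => ℂ) 2 →L[ℂ] lp (fun _ : E => ℂ) 2) (x y : E) : ℂ :=
  inner ℂ (evec x) (A (evec y))

/-- The determinant ratio `det A(F∪{x},F∪{x}) / det A(F,F)` (a real number). -/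
noncomputable def detRatio {E : Type*} [DecidableEq E]
    (A : lp (fun _ : E => ℂ) 2 →L[ℂ] lp (fun _ : E => ℂ) 2) (x : E) (F : Finset E) : ℝ :=
  ((Matrix.of fun i j : (insert x F : Finset E) => matEnt A i j).det /
    (Matrix.of fun i j : F => matEnt A i j).det).re

/-- The Papangelou intensity `α(x;ξ)` as a variational infimum. -/
noncomputable def alphaInf {E : Type*} [DecidableEq E]
    (A : lp (fun _ : E => ℂ) 2 →L[ℂ] lp (fun _ : E => ℂ) 2) (x : E) (ξ : Set E) : ℝ :=
  sInf ((fun f => (inner ℂ (evec x - f) (A (evec x - f)) : ℂ).re) ''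
    (Submodule.span ℂ (evec '' ξ) : Set (lp (fun _ : E => ℂ) 2)))

section Aux
variable {E : Type*} [DecidableEq E]

lemma inner_evec (y z : E) : (inner ℂ (evec y) (evec z) : ℂ) = if y = z then 1 else 0 := by
  rw [evec, evec, lp.inner_single_left]
  by_cases h : y = z <;>
    simp [lp.single_apply, h, RCLike.inner_apply]

noncomputable def lincomb (F : Finset E) (c : F → ℂ) : lp (fun _ : E => ℂ) 2 :=
  ∑ i : F, c i • evec (i : E)

lemma inner_evec_lincomb (F : Finset E) (c : F → ℂ) (j : F) :
    (inner ℂ (evec (j : E)) (lincomb F c) : ℂ) = c j := by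
  rw [lincomb, inner_sum]
  rw [Finset.sum_eq_single j]
  · rw [inner_smul_right, inner_evec, if_pos rfl, mul_one]
  · intro i _ hij
    rw [inner_smul_right, inner_evec, if_neg (fun h => hij (Subtype.ext h).symm), mul_zero]
  · simp

lemma lincomb_ne_zero (F : Finset E) {c : F → ℂ} (hc : c ≠ 0) : lincomb F c ≠ 0 := by
  intro h
  apply hc
  funext j
  have := inner_evec_lincomb F c j
  rw [h, inner_zero_right] at this
  simp [← this]

variable (A : lp (fun _ : E => ℂ) 2 →L[ℂ] lp (fun _ : E => ℂ) 2)

lemma conj_matEnt (hsa : ∀ f g : lp (fun _ : E => ℂ) 2, (inner ℂ (A f) g : ℂ) = inner ℂ f (A g))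
    (y z : E) : conj (matEnt A y z) = matEnt A z y := by
  rw [matEnt, inner_conj_symm, hsa, matEnt]

lemma inner_lincomb_left (F : Finset E) (c : F → ℂ) (g : lp (fun _ : E => ℂ) 2) :
    (inner ℂ (lincomb F c) g : ℂ) = ∑ i : F, conj (c i) * inner ℂ (evec (i : E)) g := by
  simp [lincomb, sum_inner, inner_smul_left]
  exact Finset.sum_congr rfl fun i _ => mul_comm _ _

lemma inner_A_lincomb (F : Finset E) (c : F → ℂ) (y : E) :
    (inner ℂ (evec y) (A (lincomb F c)) : ℂ) = ∑ i : F, c i * matEnt A y (i : E) := by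
  simp [lincomb, map_sum, _root_.map_smul, inner_sum, inner_smul_right, matEnt]

lemma Bform (F : Finset E) (c c' : F → ℂ) :
    (inner ℂ (lincomb F c) (A (lincomb F c')) : ℂ)
      = dotProduct (star c)
          ((Matrix.of fun i j : F => matEnt A i j) *ᵥ c') := by
  rw [inner_lincomb_left]
  simp only [inner_A_lincomb, dotProduct, Matrix.mulVec, dotProduct, Matrix.of_apply,
    Pi.star_apply, RCLike.star_def]
  refine Finset.sum_congr rfl fun i _ => ?_
  rw [Finset.mul_sum, Finset.mul_sum]
  exact Finset.sum_congr rfl fun j _ => by ring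

/-- The bridging equivalence between `↑(insert x F)` and `F ⊕ Unit`. -/
def insertEquiv (x : E) (F : Finset E) (hxF : x ∉ F) :
    ((insert x F : Finset E) : Type _) ≃ (F ⊕ Unit) where
  toFun z := if h : (z : E) ∈ F then Sum.inl ⟨z, h⟩ else Sum.inr ()
  invFun := Sum.elim (fun i => ⟨i, Finset.mem_insert_of_mem i.2⟩)
    (fun _ => ⟨x, Finset.mem_insert_self x F⟩)
  left_inv z := by
    dsimp only
    rcases Finset.mem_insert.mp z.2 with h | h
    · rw [dif_neg (by rw [h]; exact hxF)]
      exact Subtype.ext h.symm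
    · rw [dif_pos h]
      rfl
  right_inv s := by
    cases s with
    | inl i => simp only [Sum.elim_inl]; simp [i.2]
    | inr u => simp only [Sum.elim_inr]; simp [hxF]



lemma key (hsa : ∀ f g : lp (fun _ : E => ℂ) 2, (inner ℂ (A f) g : ℂ) = inner ℂ f (A g))
    (hpd : ∀ f : lp (fun _ : E => ℂ) 2, f ≠ 0 → 0 < (inner ℂ f (A f) : ℂ).re)
    (x : E) (F : Finset E) (hxF : x ∉ F) :
    (∀ c : F → ℂ, detRatio A x F ≤
      (inner ℂ (evec x - lincomb F c) (A (evec x - lincomb F c)) : ℂ).re)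
    ∧ ∃ c : F → ℂ, detRatio A x F =
      (inner ℂ (evec x - lincomb F c) (A (evec x - lincomb F c)) : ℂ).re := by
  classical
  set G : Matrix F F ℂ := Matrix.of fun i j : F => matEnt A (i : E) (j : E) with hGdef
  set v : F → ℂ := fun i => matEnt A (i : E) x with hvdef
  -- Hermitian
  have hherm : G.IsHermitian := by
    ext i j
    rw [Matrix.conjTranspose_apply]
    exact conj_matEnt A hsa _ _
  have hconjG : ∀ i j : F, conj (G i j) = G j i := fun i j => conj_matEnt A hsa _ _
  -- positivity of the quadratic form
  have hpos : ∀ f : lp (fun _ : E => ℂ) 2, f ≠ 0 → (0 : ℂ) < inner ℂ f (A f) := by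
    intro f hf
    rw [Complex.lt_def]
    refine ⟨by simpa using hpd f hf, ?_⟩
    have h1 : conj (inner ℂ f (A f) : ℂ) = inner ℂ f (A f) := by rw [inner_conj_symm, hsa]
    rw [Complex.conj_eq_iff_im] at h1
    simp [h1]
  have hGpd : G.PosDef := by
    refine Matrix.PosDef.of_dotProduct_mulVec_pos hherm fun c hc => ?_
    have hb := (Bform A F c c).symm
    rw [hb]
    exact hpos _ (lincomb_ne_zero F hc)
  have hdet : G.det ≠ 0 := hGpd.det_pos.ne'
  haveI : Invertible G := G.invertibleOfIsUnitDet (isUnit_iff_ne_zero.mpr hdet)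
  set w : F → ℂ := G⁻¹ *ᵥ v with hwdef
  have hGw : G *ᵥ w = v := by
    rw [hwdef, Matrix.mulVec_mulVec, Matrix.mul_nonsing_inv _ (isUnit_iff_ne_zero.mpr hdet),
      Matrix.one_mulVec]
  -- determinant computation
  set N : Matrix (F ⊕ Unit) (F ⊕ Unit) ℂ :=
    Matrix.fromBlocks G (Matrix.of fun i (_ : Unit) => v i)
      (Matrix.of fun (_ : Unit) j => matEnt A x (j : E))
      (Matrix.of fun _ _ => matEnt A x x) with hNdef
  have hM : (Matrix.of fun i j : (insert x F : Finset E) => matEnt A (i : E) (j : E))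
      = N.submatrix (insertEquiv x F hxF) (insertEquiv x F hxF) := by
    ext z y
    rw [Matrix.submatrix_apply]
    have hz : ∀ u : (insert x F : Finset E), (u : E) ∉ F → (u : E) = x := by
      intro u hu
      rcases Finset.mem_insert.mp u.2 with h | h
      · exact h
      · exact absurd h hu
    simp only [insertEquiv, Equiv.coe_fn_mk, Matrix.of_apply]
    by_cases h1 : (z : E) ∈ F
    · by_cases h2 : (y : E) ∈ F
      · rw [dif_pos h1, dif_pos h2]
        simp only [hNdef, Matrix.fromBlocks_apply₁₁, Matrix.of_apply, hGdef]
      · rw [dif_pos h1, dif_neg h2]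
        simp only [hNdef, Matrix.fromBlocks_apply₁₂, Matrix.of_apply, hvdef]
        rw [hz y h2]
    · have hzx : (z : E) = x := hz z h1
      by_cases h2 : (y : E) ∈ F
      · rw [dif_neg h1, dif_pos h2]
        simp only [hNdef, Matrix.fromBlocks_apply₂₁, Matrix.of_apply]
        rw [hzx]
      · rw [dif_neg h1, dif_neg h2]
        simp only [hNdef, Matrix.fromBlocks_apply₂₂, Matrix.of_apply]
        rw [hzx, hz y h2]
  set s : ℂ := matEnt A x x - star v ⬝ᵥ w with hsdef
  have hCB : ((Matrix.of (fun (_ : Unit) (j : F) => matEnt A x (j : E)) : Matrix Unit F ℂ) * ⅟G *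
      (Matrix.of (fun (i : F) (_ : Unit) => v i) : Matrix F Unit ℂ)) () () = star v ⬝ᵥ w := by
    rw [Matrix.invOf_eq_nonsing_inv]
    simp only [Matrix.mul_apply, Matrix.of_apply, dotProduct, Matrix.mulVec,
      dotProduct, Pi.star_apply, RCLike.star_def, Finset.sum_mul, Finset.mul_sum, hwdef]
    rw [Finset.sum_comm]
    refine Finset.sum_congr rfl fun i _ => Finset.sum_congr rfl fun j _ => ?_
    rw [← conj_matEnt A hsa (i : E) x]
    simp only [hvdef]
    ring
  have hNs : N.det = G.det * s := by
    rw [hNdef, Matrix.det_fromBlocks₁₁]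
    congr 1
    rw [Matrix.det_unique, Matrix.sub_apply, hCB, hsdef]
    rfl
  have hs' : detRatio A x F = s.re := by
    have hratio : detRatio A x F
        = (((Matrix.of fun i j : (insert x F : Finset E) => matEnt A (i : E) (j : E)).det /
            G.det) : ℂ).re := rfl
    rw [hratio, hM, Matrix.det_submatrix_equiv_self, hNs, mul_comm, mul_div_assoc,
      div_self hdet, mul_one]
  -- expansion pieces
  have hA1 : ∀ c : F → ℂ, (inner ℂ (lincomb F c) (A (evec x)) : ℂ) = star c ⬝ᵥ v := by
    intro c
    rw [inner_lincomb_left]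
    simp only [dotProduct, Pi.star_apply, RCLike.star_def, hvdef, matEnt]
  have hA2 : ∀ c : F → ℂ, (inner ℂ (evec x) (A (lincomb F c)) : ℂ)
      = ∑ i : F, c i * conj (v i) := by
    intro c
    rw [inner_A_lincomb]
    refine Finset.sum_congr rfl fun i _ => ?_
    simp only [hvdef]
    rw [conj_matEnt A hsa]
  have h1 : ∀ c : F → ℂ, star w ⬝ᵥ (G *ᵥ c) = ∑ i : F, c i * conj (v i) := by
    intro c
    have hrow : ∀ j : F, ∑ i : F, conj (w i) * G i j = conj (v j) := by
      intro j
      have hstep : ∑ i : F, conj (w i) * G i j = conj (∑ i : F, G j i * w i) := by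
        rw [map_sum]
        refine Finset.sum_congr rfl fun i _ => ?_
        rw [_root_.map_mul, hconjG j i]
        exact (mul_comm _ _).symm
      rw [hstep]
      congr 1
      exact congrFun hGw j
    calc star w ⬝ᵥ (G *ᵥ c) = ∑ i : F, ∑ j : F, conj (w i) * (G i j * c j) := by
          simp only [dotProduct, Matrix.mulVec, Pi.star_apply, RCLike.star_def,
            Finset.mul_sum]
      _ = ∑ j : F, (∑ i : F, conj (w i) * G i j) * c j := by
          rw [Finset.sum_comm]
          refine Finset.sum_congr rfl fun j _ => ?_
          rw [Finset.sum_mul]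
          exact Finset.sum_congr rfl fun i _ => by ring
      _ = ∑ i : F, c i * conj (v i) := by
          refine Finset.sum_congr rfl fun j _ => ?_
          rw [hrow j]
          ring
  have hquad : ∀ c : F → ℂ,
      (inner ℂ (evec x - lincomb F c) (A (evec x - lincomb F c)) : ℂ)
        = s + star (c - w) ⬝ᵥ (G *ᵥ (c - w)) + (star v ⬝ᵥ w - star w ⬝ᵥ v) := by
    intro c
    have hd : (inner ℂ (evec x) (A (evec x)) : ℂ) = matEnt A x x := rfl
    have hexp : (inner ℂ (evec x - lincomb F c) (A (evec x - lincomb F c)) : ℂ)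
        = matEnt A x x - star c ⬝ᵥ v - (∑ i : F, c i * conj (v i)) + star c ⬝ᵥ (G *ᵥ c) := by
      rw [map_sub, inner_sub_left, inner_sub_right, inner_sub_right,
        hA1 c, hA2 c, hd]
      have hb := Bform A F c c
      rw [← hGdef] at hb
      rw [hb]
      ring
    have hrhs : star (c - w) ⬝ᵥ (G *ᵥ (c - w))
        = star c ⬝ᵥ (G *ᵥ c) - star c ⬝ᵥ v - star w ⬝ᵥ (G *ᵥ c) + star w ⬝ᵥ v := by
      rw [Matrix.mulVec_sub, star_sub, sub_dotProduct, dotProduct_sub,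
        dotProduct_sub, hGw]
      ring
    rw [hexp, hrhs, h1 c, hsdef]
    ring
  have hconjvw : star w ⬝ᵥ v = conj (star v ⬝ᵥ w) := by
    simp only [dotProduct, Pi.star_apply, RCLike.star_def, map_sum]
    refine Finset.sum_congr rfl fun i _ => ?_
    rw [_root_.map_mul, Complex.conj_conj]
    exact mul_comm _ _
  have him : (star v ⬝ᵥ w - star w ⬝ᵥ v).re = 0 := by
    rw [Complex.sub_re, hconjvw, Complex.conj_re, sub_self]
  refine ⟨fun c => ?_, ⟨w, ?_⟩⟩
  · rw [hs', hquad c]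
    have hge : 0 ≤ (star (c - w) ⬝ᵥ (G *ᵥ (c - w))).re := by
      have h := hGpd.posSemidef.re_dotProduct_nonneg (c - w)
      simpa using h
    rw [Complex.add_re, Complex.add_re, him, add_zero]
    linarith
  · rw [hs', hquad w, sub_self, star_zero, zero_dotProduct, add_zero,
      Complex.add_re, him, add_zero]


lemma mem_span_iff_lincomb (F : Finset E) (f : lp (fun _ : E => ℂ) 2) :
    f ∈ Submodule.span ℂ (evec '' (F : Set E)) ↔ ∃ c : F → ℂ, lincomb F c = f := by
  have himg : Set.range (fun i : F => evec (i : E)) = evec '' (F : Set E) := by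
    rw [show (fun i : F => evec (i : E)) = evec ∘ ((↑) : F → E) from rfl, Set.range_comp,
      Subtype.range_coe]
  rw [← himg, Submodule.mem_span_range_iff_exists_fun]
  rfl

lemma inner_evec_span_zero {ξ : Set E} {x : E} (hx : x ∉ ξ)
    {f : lp (fun _ : E => ℂ) 2} (hf : f ∈ Submodule.span ℂ (evec '' ξ)) :
    (inner ℂ (evec x) f : ℂ) = 0 := by
  induction hf using Submodule.span_induction with
  | mem g hg =>
    obtain ⟨y, hy, rfl⟩ := hg
    rw [inner_evec, if_neg (by rintro rfl; exact hx hy)]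
  | zero => exact inner_zero_right _
  | add g h _ _ hg hh => rw [inner_add_right, hg, hh, add_zero]
  | smul a g _ hg => rw [inner_smul_right, hg, mul_zero]

lemma evec_sub_ne_zero {ξ : Set E} {x : E} (hx : x ∉ ξ)
    {f : lp (fun _ : E => ℂ) 2} (hf : f ∈ Submodule.span ℂ (evec '' ξ)) :
    evec x - f ≠ 0 := by
  intro h
  have h0 : (inner ℂ (evec x) (evec x - f) : ℂ) = 0 := by rw [h, inner_zero_right]
  rw [inner_sub_right, inner_evec_span_zero hx hf, sub_zero, inner_evec, if_pos rfl] at h0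
  exact one_ne_zero h0

lemma exists_finset_span {ξ : Set E} {f : lp (fun _ : E => ℂ) 2}
    (hf : f ∈ Submodule.span ℂ (evec '' ξ)) :
    ∃ F : Finset E, (F : Set E) ⊆ ξ ∧ f ∈ Submodule.span ℂ (evec '' (F : Set E)) := by
  obtain ⟨T, hTsub, hfT⟩ := Submodule.mem_span_finite_of_mem_span hf
  choose y hy hevec using fun (t : lp (fun _ : E => ℂ) 2) (ht : t ∈ (T : Set _)) => hTsub ht
  refine ⟨T.attach.image (fun t => y t.1 (Finset.mem_coe.mpr t.2)), ?_, ?_⟩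
  · intro z hz
    rw [Finset.coe_image] at hz
    obtain ⟨t, -, rfl⟩ := hz
    exact hy _ _
  · refine Submodule.span_mono ?_ hfT
    intro t ht
    have ht' : t ∈ (T : Set _) := ht
    refine ⟨y t ht', ?_, hevec t ht'⟩
    rw [Finset.coe_image]
    exact ⟨⟨t, Finset.mem_coe.mp ht'⟩, Finset.mem_coe.mpr (Finset.mem_attach _ _), rfl⟩

end Aux

/-- **Monotone convergence of determinant ratios to the Papangelou intensity.**
Let `A` be a bounded self-adjoint positive-definite operator on `l²(E)`, `ξ ⊆ E`, `x ∉ ξ`.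
For finite `F ⊆ ξ`, put `r(F) = det A(F∪{x},F∪{x}) / det A(F,F)`.  Then (i) `r` is
antitone; (ii) `inf {r(F) : F ⊆ ξ finite} = α(x;ξ)`; and the net `(r(ξ∩Λ))_{Λ ↑ E}`
converges to `α(x;ξ)`. -/
theorem statement4 {E : Type*} [Countable E] [DecidableEq E]
    (A : lp (fun _ : E => ℂ) 2 →L[ℂ] lp (fun _ : E => ℂ) 2)
    (hsa : ∀ f g : lp (fun _ : E => ℂ) 2, (inner ℂ (A f) g : ℂ) = inner ℂ f (A g))
    (hpd : ∀ f : lp (fun _ : E => ℂ) 2, f ≠ 0 → 0 < (inner ℂ f (A f) : ℂ).re)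
    (ξ : Set E) [DecidablePred (· ∈ ξ)] (x : E) (hx : x ∉ ξ) :
    (∀ F F' : Finset E, (F : Set E) ⊆ ξ → (F' : Set E) ⊆ ξ → F ⊆ F' →
        detRatio A x F' ≤ detRatio A x F) ∧
    sInf (detRatio A x '' {F : Finset E | (F : Set E) ⊆ ξ}) = alphaInf A x ξ ∧
    Tendsto (fun Λ : Finset E => detRatio A x (Λ.filter (· ∈ ξ))) atTop
      (nhds (alphaInf A x ξ)) := by

  classical
  set P : lp (fun _ : E => ℂ) 2 → ℝ :=
    fun f => (inner ℂ (evec x - f) (A (evec x - f)) : ℂ).re with hPdef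
  set Sxi : Set ℝ :=
    P '' (Submodule.span ℂ (evec '' ξ) : Set (lp (fun _ : E => ℂ) 2)) with hSxidef
  have halpha : alphaInf A x ξ = sInf Sxi := rfl
  have hPpos : ∀ f ∈ Submodule.span ℂ (evec '' ξ), 0 < P f :=
    fun f hf => hpd _ (evec_sub_ne_zero hx hf)
  have hbdd2 : BddBelow Sxi := by
    refine ⟨0, ?_⟩
    rintro p ⟨f, hf, rfl⟩
    exact (hPpos f hf).le
  have hne2 : Sxi.Nonempty := ⟨P 0, 0, Submodule.zero_mem _, rfl⟩
  have hkey : ∀ F : Finset E, (F : Set E) ⊆ ξ →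
      (∀ f ∈ Submodule.span ℂ (evec '' (F : Set E)), detRatio A x F ≤ P f) ∧
        ∃ f ∈ Submodule.span ℂ (evec '' (F : Set E)), detRatio A x F = P f := by
    intro F hF
    have hxF : x ∉ F := fun h => hx (hF (Finset.mem_coe.mpr h))
    obtain ⟨hle, c₀, hc₀⟩ := key A hsa hpd x F hxF
    constructor
    · intro f hf
      obtain ⟨c, rfl⟩ := (mem_span_iff_lincomb F f).mp hf
      exact hle c
    · exact ⟨lincomb F c₀, (mem_span_iff_lincomb F _).mpr ⟨c₀, rfl⟩, hc₀⟩
  have hmono : ∀ F F' : Finset E, (F : Set E) ⊆ ξ → (F' : Set E) ⊆ ξ → F ⊆ F' →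
      detRatio A x F' ≤ detRatio A x F := by
    intro F F' hF hF' hFF'
    obtain ⟨f, hfmem, hfeq⟩ := (hkey F hF).2
    have hfmem' : f ∈ Submodule.span ℂ (evec '' (F' : Set E)) :=
      Submodule.span_mono (Set.image_mono (by exact_mod_cast hFF')) hfmem
    rw [hfeq]
    exact (hkey F' hF').1 f hfmem'
  set S1 : Set ℝ := detRatio A x '' {F : Finset E | (F : Set E) ⊆ ξ} with hS1def
  have hsub : S1 ⊆ Sxi := by
    rintro r ⟨F, hF, rfl⟩
    obtain ⟨f, hf, heq⟩ := (hkey F hF).2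
    exact ⟨f, Submodule.span_mono (Set.image_mono hF) hf, heq.symm⟩
  have hne1 : S1.Nonempty := ⟨_, ⟨∅, by simp, rfl⟩⟩
  have hbdd1 : BddBelow S1 := hbdd2.mono hsub
  have hinf : sInf S1 = alphaInf A x ξ := by
    rw [halpha]
    apply le_antisymm
    · refine le_csInf hne2 ?_
      rintro p ⟨f, hf, rfl⟩
      obtain ⟨F, hFξ, hfF⟩ := exists_finset_span hf
      exact (csInf_le hbdd1 ⟨F, hFξ, rfl⟩).trans ((hkey F hFξ).1 f hfF)
    · exact csInf_le_csInf hbdd2 hne1 hsub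
  refine ⟨hmono, hinf, ?_⟩
  set g : Finset E → ℝ := fun Λ => detRatio A x (Λ.filter (· ∈ ξ)) with hgdef
  have hfiltξ : ∀ Λ : Finset E, ((Λ.filter (· ∈ ξ) : Finset E) : Set E) ⊆ ξ := by
    intro Λ y hy
    rw [Finset.mem_coe, Finset.mem_filter] at hy
    exact hy.2
  have hganti : Antitone g := by
    intro Λ Λ' h
    exact hmono _ _ (hfiltξ Λ) (hfiltξ Λ') (Finset.filter_subset_filter _ h)
  have hrange : Set.range g = S1 := by
    ext r
    constructor
    · rintro ⟨Λ, rfl⟩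
      exact ⟨Λ.filter (· ∈ ξ), hfiltξ Λ, rfl⟩
    · rintro ⟨F, hF, rfl⟩
      refine ⟨F, ?_⟩
      rw [hgdef]
      dsimp only
      rw [Finset.filter_true_of_mem (fun y hy => hF (Finset.mem_coe.mpr hy))]
  have hbddr : BddBelow (Set.range g) := hrange ▸ hbdd1
  have htd := tendsto_atTop_ciInf hganti hbddr
  have h2 : (⨅ Λ, g Λ) = alphaInf A x ξ := by
    rw [iInf, hrange, hinf]
  rw [h2] at htd
  exact htd
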